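/- Let m ≥ 1 and r ≥ 1 and let (N_1,…,N_r) be a lattice path presentation such that M[N] is a connected matroid. An element x ∈ {1,…,m+r} lies in some spanning circuit of M[N] if and only if x belongs to at least two of the sets N_1,…,N_r, or x ∈ N_1, or x ∈ N_r. -/

import Mathlib

open Set
open scoped Matroid

namespace LPM

variable {α β : Type*}

/-- `I` is a partial transversal of the set family `N`: there is an injection
matching each element of `I` to an index of a member of the family containing it. -/
def IsPT {ι : Type*} (N : ι → Set α) (I : Set α) : Prop :=
  ∃ f : I → ι, Function.Injective f ∧ ∀ x : I, (x : α) ∈ N (f x)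

/-- `I` is a (full) transversal of the set family `N`: there is a bijection
matching each element of `I` to an index of a member of the family containing it. -/
def IsT {ι : Type*} (N : ι → Set α) (I : Set α) : Prop :=
  ∃ f : I → ι, Function.Bijective f ∧ ∀ x : I, (x : α) ∈ N (f x)

/-- A lattice path presentation with nullity `m` and rank `r`: a sequence of
intervals `[l i, g i] ⊆ {1, …, m + r}` whose left endpoints strictly increase
and whose right endpoints strictly increase. -/
structure LPP (m r : ℕ) where
  l : Fin r → ℕ
  g : Fin r → ℕ
  l_strictMono : StrictMono l
  g_strictMono : StrictMono g
  one_le_l : ∀ i, 1 ≤ l i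
  l_le_g : ∀ i, l i ≤ g i
  g_le : ∀ i, g i ≤ m + r

/-- The intervals of a lattice path presentation. -/
def LPP.N {m r : ℕ} (P : LPP m r) (i : Fin r) : Set ℕ := Set.Icc (P.l i) (P.g i)

/-- `M` is the lattice path matroid `M[N]` of the presentation `P`: the ground set
is `{1, …, m + r}` and the independent sets are exactly the partial transversals
of the intervals of `P`. -/
def IsLPMOf {m r : ℕ} (P : LPP m r) (M : Matroid ℕ) : Prop :=
  M.E = Set.Icc 1 (m + r) ∧
    ∀ I : Set ℕ, M.Indep I ↔ I ⊆ Set.Icc 1 (m + r) ∧ IsPT P.N I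

/-- `M` is isomorphic to `M'`: there is a bijection between the ground sets
carrying independent sets to independent sets in both directions. -/
def IsoTo (M : Matroid α) (M' : Matroid β) : Prop :=
  ∃ f : α → β, Set.BijOn f M.E M'.E ∧ ∀ I ⊆ M.E, (M.Indep I ↔ M'.Indep (f '' I))

/-- A lattice path matroid: a matroid isomorphic to `M[N]` for some lattice path
presentation (presentations with `r = 0` give the rank-zero matroids). -/
def IsLPMatroid (M : Matroid α) : Prop :=
  ∃ (m r : ℕ) (P : LPP m r) (M₀ : Matroid ℕ), IsLPMOf P M₀ ∧ IsoTo M M₀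

/-- A circuit of a matroid: a minimal dependent subset of the ground set. -/
def Circuit (M : Matroid α) (C : Set α) : Prop :=
  C ⊆ M.E ∧ ¬ M.Indep C ∧ ∀ D : Set α, D ⊂ C → M.Indep D

/-- A matroid is connected if every two distinct elements of the ground set lie
in a common circuit. -/
def Connected (M : Matroid α) : Prop :=
  ∀ x ∈ M.E, ∀ y ∈ M.E, x ≠ y → ∃ C, Circuit M C ∧ x ∈ C ∧ y ∈ C

/-- The rank of a set in a matroid: the supremum of the cardinalities of its
independent subsets. -/
noncomputable def rk (M : Matroid α) (X : Set α) : ℕ :=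
  sSup {n | ∃ I, I ⊆ X ∧ M.Indep I ∧ I.ncard = n}

/-- A nontrivial connected flat: a flat that is dependent and whose restriction
is a connected matroid. -/
def NTConnFlat (M : Matroid α) (X : Set α) : Prop :=
  M.IsFlat X ∧ ¬ M.Indep X ∧ Connected (M ↾ X)

/-- Deletion of a set from a matroid. -/
def delete (M : Matroid α) (D : Set α) : Matroid α := M ↾ (M.E \ D)

/-- Contraction of a set in a matroid, defined via duality. -/
def contract (M : Matroid α) (C : Set α) : Matroid α := (delete M✶ C)✶

/-- `Minor M' M` means that `M'` is obtained from `M` by a sequence of deletions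
and contractions. -/
inductive Minor : Matroid α → Matroid α → Prop
  | refl (M : Matroid α) : Minor M M
  | del {M' M : Matroid α} (D : Set α) (h : Minor M' M) : Minor (delete M' D) M
  | con {M' M : Matroid α} (C : Set α) (h : Minor M' M) : Minor (contract M' C) M

end LPM

namespace LPM

variable {m r : ℕ}

lemma aux_memN {P : LPP m r} {i : Fin r} {z : ℕ} (h1 : P.l i ≤ z) (h2 : z ≤ P.g i) :
    z ∈ P.N i := ⟨h1, h2⟩

lemma aux_N_low {P : LPP m r} {i : Fin r} {z : ℕ} (h : z ∈ P.N i) : P.l i ≤ z := h.1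

lemma aux_N_high {P : LPP m r} {i : Fin r} {z : ℕ} (h : z ∈ P.N i) : z ≤ P.g i := h.2

lemma aux_N_subset (P : LPP m r) (i : Fin r) : P.N i ⊆ Set.Icc 1 (m + r) :=
  Set.Icc_subset_Icc (P.one_le_l i) (P.g_le i)

lemma aux_pt_mono {P : LPP m r} {I J : Set ℕ} (h : J ⊆ I) (hI : IsPT P.N I) : IsPT P.N J := by
  obtain ⟨f, hf, hmem⟩ := hI
  exact ⟨fun z => f (Set.inclusion h z), hf.comp (Set.inclusion_injective h),
    fun z => hmem (Set.inclusion h z)⟩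

lemma aux_indep_mono {P : LPP m r} {M : Matroid ℕ} (hM : IsLPMOf P M) {I J : Set ℕ}
    (h : J ⊆ I) (hI : M.Indep I) : M.Indep J := by
  rw [hM.2] at hI ⊢
  exact ⟨h.trans hI.1, aux_pt_mono h hI.2⟩

lemma aux_pt_card {P : LPP m r} {I : Set ℕ} (hI : IsPT P.N I) : I.ncard ≤ r := by
  obtain ⟨f, hf, -⟩ := hI
  have h1 : Nat.card I ≤ Nat.card (Fin r) := Nat.card_le_card_of_injective f hf
  simpa [Nat.card_coe_set_eq] using h1

lemma aux_basis_struct (P : LPP m r) (e : Fin r → ℕ) (he : StrictMono e)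
    (hPT : IsPT P.N (Set.range e)) (i : Fin r) : e i ∈ P.N i := by
  obtain ⟨f, hf, hmem⟩ := hPT
  set F : Fin r → Fin r := fun j => f ⟨e j, Set.mem_range_self j⟩ with hF
  have hFinj : Function.Injective F := by
    intro a b hab
    exact he.injective (congrArg Subtype.val (hf hab))
  have hlow : ∀ j, P.l (F j) ≤ e j := fun j => (hmem ⟨e j, Set.mem_range_self j⟩).1
  have hhigh : ∀ j, e j ≤ P.g (F j) := fun j => (hmem ⟨e j, Set.mem_range_self j⟩).2
  constructor
  · by_contra hcon
    push_neg at hcon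
    have hsmall : ∀ k ∈ Finset.Iic i, F k ∈ Finset.Iio i := by
      intro k hk
      rw [Finset.mem_Iic] at hk
      rw [Finset.mem_Iio]
      by_contra hge
      push_neg at hge
      have h1 : P.l i ≤ P.l (F k) := P.l_strictMono.monotone hge
      have h2 : e k ≤ e i := he.monotone hk
      have h3 := hlow k
      omega
    have hcard := Finset.card_le_card_of_injOn F hsmall hFinj.injOn
    rw [Fin.card_Iic, Fin.card_Iio] at hcard
    omega
  · by_contra hcon
    push_neg at hcon
    have hbig : ∀ k ∈ Finset.Ici i, F k ∈ Finset.Ioi i := by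
      intro k hk
      rw [Finset.mem_Ici] at hk
      rw [Finset.mem_Ioi]
      by_contra hge
      push_neg at hge
      have h1 : P.g (F k) ≤ P.g i := P.g_strictMono.monotone hge
      have h2 : e i ≤ e k := he.monotone hk
      have h3 := hhigh k
      omega
    have hcard := Finset.card_le_card_of_injOn F hbig hFinj.injOn
    rw [Fin.card_Ici, Fin.card_Ioi] at hcard
    have := i.isLt
    omega

lemma aux_cover (hm : 1 ≤ m) (hr : 1 ≤ r) (P : LPP m r) {M : Matroid ℕ} (hM : IsLPMOf P M)
    (hconn : Connected M) {x : ℕ} (hx : x ∈ Set.Icc 1 (m + r)) : ∃ i, x ∈ P.N i := by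
  by_contra hno
  push_neg at hno
  have hx' : x ∈ M.E := by rw [hM.1]; exact hx
  obtain ⟨y, hy, hxy⟩ : ∃ y, y ∈ M.E ∧ y ≠ x := by
    simp only [Set.mem_Icc] at hx
    rcases eq_or_ne x 1 with h1 | h1
    · exact ⟨2, by rw [hM.1]; simp; omega, by omega⟩
    · exact ⟨1, by rw [hM.1]; simp; omega, by omega⟩
  obtain ⟨C, hC, hxC, hyC⟩ := hconn x hx' y hy (Ne.symm hxy)
  have hss : {x} ⊂ C := by
    rw [Set.ssubset_iff_subset_ne]
    refine ⟨by simpa using hxC, fun h => hxy ?_⟩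
    rw [← h] at hyC
    simpa using hyC
  have hind := hC.2.2 _ hss
  rw [hM.2] at hind
  obtain ⟨-, f, -, hmem⟩ := hind
  exact hno (f ⟨x, rfl⟩) (hmem ⟨x, rfl⟩)

lemma aux_conn (hm : 1 ≤ m) (hr : 1 ≤ r) (P : LPP m r) {M : Matroid ℕ} (hM : IsLPMOf P M)
    (hconn : Connected M) (i : ℕ) (h : i + 1 < r) :
    P.l ⟨i + 1, h⟩ ≤ P.g ⟨i, by omega⟩ := by
  by_contra hcon
  push_neg at hcon
  set a := P.g ⟨i, by omega⟩ with ha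
  set b := P.l ⟨i + 1, h⟩ with hb
  have haE : a ∈ M.E := by
    rw [hM.1]; exact ⟨le_trans (P.one_le_l _) (P.l_le_g _), P.g_le _⟩
  have hbE : b ∈ M.E := by
    rw [hM.1]; exact ⟨P.one_le_l _, le_trans (P.l_le_g _) (P.g_le _)⟩
  obtain ⟨C, hC, haC, hbC⟩ := hconn a haE b hbE (by omega)
  have hCA : (C ∩ {z | z ≤ a}) ⊂ C := by
    rw [Set.ssubset_iff_subset_ne]
    refine ⟨Set.inter_subset_left, fun hEq => ?_⟩
    have : b ∈ C ∩ {z | z ≤ a} := by rw [hEq]; exact hbC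
    have := this.2
    simp only [Set.mem_setOf_eq] at this
    omega
  have hCB : (C ∩ {z | a < z}) ⊂ C := by
    rw [Set.ssubset_iff_subset_ne]
    refine ⟨Set.inter_subset_left, fun hEq => ?_⟩
    have : a ∈ C ∩ {z | a < z} := by rw [hEq]; exact haC
    have := this.2
    simp only [Set.mem_setOf_eq] at this
    omega
  have hIA := hC.2.2 _ hCA
  have hIB := hC.2.2 _ hCB
  rw [hM.2] at hIA hIB
  obtain ⟨-, fA, hfA, hmA⟩ := hIA
  obtain ⟨-, fB, hfB, hmB⟩ := hIB
  have keyA : ∀ z : ↥(C ∩ {z | z ≤ a}), (fA z).val ≤ i := by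
    intro z
    by_contra hk
    push_neg at hk
    have h1 := (hmA z).1
    have h2 : b ≤ P.l (fA z) := P.l_strictMono.monotone (Fin.le_def.mpr (show i + 1 ≤ (fA z).val by omega))
    have h3 : (z : ℕ) ≤ a := z.2.2
    omega
  have keyB : ∀ z : ↥(C ∩ {z | a < z}), i < (fB z).val := by
    intro z
    by_contra hk
    push_neg at hk
    have h1 := (hmB z).2
    have h2 : P.g (fB z) ≤ a := P.g_strictMono.monotone (Fin.le_def.mpr (show (fB z).val ≤ i from hk))
    have h3 : a < (z : ℕ) := z.2.2
    omega
  apply hC.2.1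
  rw [hM.2]
  refine ⟨hM.1 ▸ hC.1, ?_⟩
  refine ⟨fun z => if hz : (z : ℕ) ≤ a then fA ⟨z, z.2, hz⟩
    else fB ⟨z, z.2, show a < (z : ℕ) by omega⟩, ?_, ?_⟩
  · intro z1 z2 h12
    by_cases h1 : (z1 : ℕ) ≤ a <;> by_cases h2 : (z2 : ℕ) ≤ a
    · simp only [dif_pos h1, dif_pos h2] at h12
      have hv := congrArg Subtype.val (hfA h12)
      exact Subtype.ext hv
    · simp only [dif_pos h1, dif_neg h2] at h12
      have hA := keyA ⟨z1, z1.2, h1⟩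
      have hB := keyB ⟨z2, z2.2, show a < (z2 : ℕ) by omega⟩
      have := congrArg Fin.val h12
      omega
    · simp only [dif_neg h1, dif_pos h2] at h12
      have hA := keyA ⟨z2, z2.2, h2⟩
      have hB := keyB ⟨z1, z1.2, show a < (z1 : ℕ) by omega⟩
      have := congrArg Fin.val h12
      omega
    · simp only [dif_neg h1, dif_neg h2] at h12
      have hv := congrArg Subtype.val (hfB h12)
      exact Subtype.ext hv
  · intro z
    by_cases hz : (z : ℕ) ≤ a
    · simp only [dif_pos hz]; exact hmA _
    · simp only [dif_neg hz]; exact hmB _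

lemma aux_ncard_range {k : ℕ} (f : Fin k → ℕ) (hf : Function.Injective f) :
    (Set.range f).ncard = k := by
  rw [← Nat.card_coe_set_eq, Nat.card_range_of_injective hf, Nat.card_eq_fintype_card,
    Fintype.card_fin]

lemma aux_rk_eq {P : LPP m r} {M : Matroid ℕ} (hM : IsLPMOf P M) {X I : Set ℕ}
    (hIX : I ⊆ X) (hI : M.Indep I) (hIc : I.ncard = r) : rk M X = r := by
  unfold rk
  have hub : ∀ n ∈ {n | ∃ I, I ⊆ X ∧ M.Indep I ∧ I.ncard = n}, n ≤ r := by
    rintro n ⟨J, hJX, hJ, rfl⟩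
    exact aux_pt_card ((hM.2 J).mp hJ).2
  apply le_antisymm
  · exact csSup_le ⟨I.ncard, I, hIX, hI, rfl⟩ hub
  · exact le_csSup ⟨r, hub⟩ ⟨I, hIX, hI, hIc⟩

lemma aux_range_l_indep (P : LPP m r) {M : Matroid ℕ} (hM : IsLPMOf P M) :
    M.Indep (Set.range P.l) := by
  rw [hM.2]
  constructor
  · rintro z ⟨i, rfl⟩
    exact ⟨P.one_le_l i, le_trans (P.l_le_g i) (P.g_le i)⟩
  · refine ⟨Set.rangeSplitting P.l, ?_, ?_⟩
    · intro z1 z2 h12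
      apply Subtype.ext
      rw [← Set.apply_rangeSplitting P.l z1, ← Set.apply_rangeSplitting P.l z2, h12]
    · intro z
      have hz := Set.apply_rangeSplitting P.l z
      refine ⟨hz.le, ?_⟩
      calc (z : ℕ) = P.l _ := hz.symm
        _ ≤ P.g _ := P.l_le_g _

lemma aux_rk_ground (P : LPP m r) {M : Matroid ℕ} (hM : IsLPMOf P M) : rk M M.E = r := by
  apply aux_rk_eq hM (I := Set.range P.l) ?_ (aux_range_l_indep P hM) ?_
  · rintro z ⟨i, rfl⟩
    rw [hM.1]
    exact ⟨P.one_le_l i, le_trans (P.l_le_g i) (P.g_le i)⟩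
  · exact aux_ncard_range P.l P.l_strictMono.injective

/-- A chain presentation of a spanning circuit. -/
def ChainC (P : LPP m r) (c : Fin (r + 1) → ℕ) : Prop :=
  StrictMono c ∧ (∀ i : Fin r, c i.castSucc ∈ P.N i) ∧ (∀ i : Fin r, c i.succ ∈ P.N i)

lemma aux_chain_mem1 {P : LPP m r} {c : Fin (r + 1) → ℕ}
    (hc1 : ∀ i : Fin r, c i.castSucc ∈ P.N i) (v : ℕ) (hv : v < r)
    (k : Fin (r + 1)) (hk : k.val = v) : c k ∈ P.N ⟨v, hv⟩ := by
  have e : (⟨v, hv⟩ : Fin r).castSucc = k := by ext; simp [hk.symm]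
  rw [← e]
  exact hc1 _

lemma aux_chain_mem2 {P : LPP m r} {c : Fin (r + 1) → ℕ}
    (hc2 : ∀ i : Fin r, c i.succ ∈ P.N i) (v : ℕ) (hv : v < r)
    (k : Fin (r + 1)) (hk : k.val = v + 1) : c k ∈ P.N ⟨v, hv⟩ := by
  have e : (⟨v, hv⟩ : Fin r).succ = k := by ext; simp [hk.symm]
  rw [← e]
  exact hc2 _

lemma aux_chain_circuit (hr : 1 ≤ r) (P : LPP m r) {M : Matroid ℕ} (hM : IsLPMOf P M)
    {c : Fin (r + 1) → ℕ} (hc : ChainC P c) :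
    Circuit M (Set.range c) ∧ rk M (Set.range c) = r := by
  obtain ⟨hmono, h1, h2⟩ := hc
  have hinj := hmono.injective
  have hmemN : ∀ k : Fin (r + 1), ∃ i : Fin r, c k ∈ P.N i := by
    intro k
    rcases Nat.lt_or_ge k.val r with hk | hk
    · exact ⟨_, aux_chain_mem1 h1 k.val hk k rfl⟩
    · exact ⟨_, aux_chain_mem2 h2 (r - 1) (by omega) k (by have := k.isLt; omega)⟩
  have hsubE : Set.range c ⊆ Set.Icc 1 (m + r) := by
    rintro z ⟨k, rfl⟩
    obtain ⟨i, hi⟩ := hmemN k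
    exact aux_N_subset P i hi
  have hdiff : ∀ j : Fin (r + 1), M.Indep (Set.range c \ {c j}) := by
    intro j
    rw [hM.2]
    refine ⟨Set.diff_subset.trans hsubE, ?_⟩
    have hFmem : ∀ z : ↥(Set.range c \ {c j}), ∃ k : Fin (r + 1), k ≠ j ∧ c k = z := by
      intro z
      obtain ⟨k, hk⟩ := z.2.1
      refine ⟨k, fun hkj => z.2.2 ?_, hk⟩
      rw [← hk, hkj]
      rfl
    choose K hKne hKc using hFmem
    have hKval : ∀ z, (K z).val ≠ j.val := fun z h => hKne z (Fin.ext h)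
    refine ⟨fun z => if hkz : (K z).val < j.val then ⟨(K z).val, by have := j.isLt; omega⟩
        else ⟨(K z).val - 1, by have := (K z).isLt; omega⟩, ?_, ?_⟩
    · intro z1 z2 h12
      have hv1 := hKval z1
      have hv2 := hKval z2
      have hKeq : K z1 = K z2 := by
        by_cases hh1 : (K z1).val < j.val <;> by_cases hh2 : (K z2).val < j.val
        · simp only [dif_pos hh1, dif_pos hh2] at h12
          exact Fin.ext (congrArg Fin.val h12 : _)
        · simp only [dif_pos hh1, dif_neg hh2] at h12
          have := congrArg Fin.val h12
          simp only at this
          exact Fin.ext (by omega)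
        · simp only [dif_neg hh1, dif_pos hh2] at h12
          have := congrArg Fin.val h12
          simp only at this
          exact Fin.ext (by omega)
        · simp only [dif_neg hh1, dif_neg hh2] at h12
          have := congrArg Fin.val h12
          simp only at this
          exact Fin.ext (by omega)
      apply Subtype.ext
      rw [← hKc z1, ← hKc z2, hKeq]
    · intro z
      by_cases hh : (K z).val < j.val
      · simp only [dif_pos hh]
        rw [← hKc z]
        exact aux_chain_mem1 h1 (K z).val (by have := j.isLt; omega) (K z) rfl
      · simp only [dif_neg hh]
        have hv := hKval z
        rw [← hKc z]
        exact aux_chain_mem2 h2 ((K z).val - 1) (by have := (K z).isLt; omega) (K z) (by omega)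
  have hdep : ¬ M.Indep (Set.range c) := by
    intro hind
    rw [hM.2] at hind
    obtain ⟨-, f, hfinj, -⟩ := hind
    have hGi : Function.Injective (fun k : Fin (r + 1) => f ⟨c k, Set.mem_range_self k⟩) := by
      intro a b hab
      exact hinj (congrArg Subtype.val (hfinj hab))
    have := Fintype.card_le_of_injective _ hGi
    simp at this
  have hcirc : Circuit M (Set.range c) := by
    refine ⟨by rw [hM.1]; exact hsubE, hdep, ?_⟩
    intro D hD
    obtain ⟨y, hyC, hyD⟩ := Set.exists_of_ssubset hD
    obtain ⟨j, rfl⟩ := hyC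
    refine aux_indep_mono hM (show D ⊆ Set.range c \ {c j} from ?_) (hdiff j)
    intro z hz
    refine ⟨hD.subset hz, fun he => hyD ?_⟩
    simp only [Set.mem_singleton_iff] at he
    rwa [← he]
  have hfin : (Set.range c).Finite := Set.finite_range c
  have hcard : (Set.range c).ncard = r + 1 := aux_ncard_range c hinj
  have hIcard : (Set.range c \ {c (Fin.last r)}).ncard = r := by
    rw [Set.ncard_diff_singleton_of_mem (Set.mem_range_self _), hcard]
    omega
  exact ⟨hcirc, aux_rk_eq hM Set.diff_subset (hdiff _) hIcard⟩

lemma aux_circuit_chain (hr : 1 ≤ r) (P : LPP m r) {M : Matroid ℕ} (hM : IsLPMOf P M)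
    {C : Set ℕ} (hC : Circuit M C) (hrk : rk M C = r) :
    ∃ c : Fin (r + 1) → ℕ, ChainC P c ∧ C = Set.range c := by
  have hCE : C ⊆ Set.Icc 1 (m + r) := hM.1 ▸ hC.1
  have hfin : C.Finite := (Set.finite_Icc 1 (m + r)).subset hCE
  have hbdd : ∀ n ∈ {n | ∃ I, I ⊆ C ∧ M.Indep I ∧ I.ncard = n}, n ≤ r := by
    rintro n ⟨I, hIC, hI, rfl⟩
    exact aux_pt_card ((hM.2 I).mp hI).2
  have h0 : (0 : ℕ) ∈ {n | ∃ I, I ⊆ C ∧ M.Indep I ∧ I.ncard = n} := by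
    refine ⟨∅, Set.empty_subset C, ?_, Set.ncard_empty ℕ⟩
    rw [hM.2]
    exact ⟨Set.empty_subset _, fun z => (Set.notMem_empty _ z.2).elim,
      fun a b _ => (Set.notMem_empty _ a.2).elim, fun z => (Set.notMem_empty _ z.2).elim⟩
  have hrS : r ∈ {n | ∃ I, I ⊆ C ∧ M.Indep I ∧ I.ncard = n} := by
    have hmem := Nat.sSup_mem ⟨0, h0⟩ ⟨r, hbdd⟩
    unfold rk at hrk
    rwa [hrk] at hmem
  obtain ⟨I, hIC, hI, hIcard⟩ := hrS
  have hne : I ≠ C := fun h => hC.2.1 (h ▸ hI)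
  have hlt : r < C.ncard := hIcard ▸ Set.ncard_lt_ncard (hIC.ssubset_of_ne hne) hfin
  have hle : C.ncard ≤ r + 1 := by
    by_contra hcon
    push_neg at hcon
    obtain ⟨t, htC, htcard⟩ := Set.exists_subset_card_eq (show r + 1 ≤ C.ncard by omega)
    have htne : t ≠ C := fun h => by rw [h] at htcard; omega
    have := hbdd t.ncard ⟨t, htC, hC.2.2 t (htC.ssubset_of_ne htne), rfl⟩
    omega
  have hcard : C.ncard = r + 1 := by omega
  have hcard' : hfin.toFinset.card = r + 1 := by
    rwa [← Set.ncard_eq_toFinset_card C hfin]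
  set e := hfin.toFinset.orderIsoOfFin hcard' with he
  set c : Fin (r + 1) → ℕ := fun k => (e k : ℕ) with hcdef
  have hmono : StrictMono c := fun a b hab => Subtype.coe_lt_coe.mpr (e.strictMono hab)
  have hrange : Set.range c = C := by
    ext z
    constructor
    · rintro ⟨k, rfl⟩
      have := (e k).2
      rwa [Set.Finite.mem_toFinset] at this
    · intro hz
      obtain ⟨k, hk⟩ := e.surjective ⟨z, hfin.mem_toFinset.mpr hz⟩
      exact ⟨k, congrArg Subtype.val hk⟩
  have hstruct : ∀ j : Fin (r + 1),
      ∀ i : Fin r, (if i.val < j.val then c i.castSucc else c i.succ) ∈ P.N i := by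
    intro j
    set ej : Fin r → ℕ := fun i => if i.val < j.val then c i.castSucc else c i.succ with hej
    have hejmono : StrictMono ej := by
      intro a b hab
      have hab' : a.val < b.val := hab
      simp only [hej]
      split_ifs with hh1 hh2 hh2
      · exact hmono (show a.castSucc < b.castSucc from by rw [Fin.lt_def]; simpa)
      · exact hmono (show a.castSucc < b.succ from by rw [Fin.lt_def]; simp; omega)
      · exact (by omega : False).elim
      · exact hmono (show a.succ < b.succ from by rw [Fin.lt_def]; simp; omega)
    have hsub : Set.range ej ⊆ C := by
      rintro z ⟨i, rfl⟩
      simp only [hej]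
      split_ifs
      · rw [← hrange]; exact Set.mem_range_self _
      · rw [← hrange]; exact Set.mem_range_self _
    have hnot : c j ∉ Set.range ej := by
      rintro ⟨i, hi⟩
      simp only [hej] at hi
      split_ifs at hi with hh
      · have hEq := hmono.injective hi
        have : i.val = j.val := congrArg Fin.val hEq
        omega
      · have hEq := hmono.injective hi
        have : i.val + 1 = j.val := congrArg Fin.val hEq
        omega
    have hcjC : c j ∈ C := hrange ▸ Set.mem_range_self j
    have hPT := hC.2.2 (Set.range ej) (hsub.ssubset_of_ne (fun h => hnot (h.symm ▸ hcjC)))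
    rw [hM.2] at hPT
    exact fun i => aux_basis_struct P ej hejmono hPT.2 i
  refine ⟨c, ⟨hmono, ?_, ?_⟩, hrange.symm⟩
  · intro i
    have := hstruct (Fin.last r) i
    rwa [if_pos (by simp [Fin.val_last])] at this
  · intro i
    have := hstruct 0 i
    rwa [if_neg (by simp)] at this

lemma aux_chain_exists (hr : 1 ≤ r) (P : LPP m r)
    (hconn' : ∀ (i : ℕ) (h : i + 1 < r), P.l ⟨i + 1, h⟩ ≤ P.g ⟨i, by omega⟩)
    (x : ℕ) (p : Fin (r + 1))
    (hp1 : 1 ≤ p.val → P.l ⟨p.val - 1, by have := p.isLt; omega⟩ < x ∧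
      x ∈ P.N ⟨p.val - 1, by have := p.isLt; omega⟩)
    (hp2 : ∀ h : p.val < r, x < P.g ⟨p.val, h⟩ ∧ x ∈ P.N ⟨p.val, h⟩) :
    ∃ c : Fin (r + 1) → ℕ, ChainC P c ∧ x ∈ Set.range c := by
  set c : Fin (r + 1) → ℕ := fun k =>
      if hk : k.val < p.val then P.l ⟨k.val, by have := p.isLt; omega⟩
      else if hk2 : k.val = p.val then x
      else P.g ⟨k.val - 1, by have := k.isLt; omega⟩ with hcdef
  have hcval : ∀ (k : Fin (r + 1)),
      (∀ h : k.val < p.val, c k = P.l ⟨k.val, by have := p.isLt; omega⟩) ∧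
      (k.val = p.val → c k = x) ∧
      (∀ h : p.val < k.val, c k = P.g ⟨k.val - 1, by have := k.isLt; omega⟩) := by
    intro k
    refine ⟨fun h => ?_, fun h => ?_, fun h => ?_⟩
    · simp only [hcdef, dif_pos h]
    · simp only [hcdef, dif_neg (show ¬ k.val < p.val by omega), dif_pos h]
    · simp only [hcdef, dif_neg (show ¬ k.val < p.val by omega),
        dif_neg (show ¬ k.val = p.val by omega)]
  have hpl := p.isLt
  have hlt : ∀ a b : Fin (r + 1), a.val < b.val → c a < c b := by
    intro a b hab
    have hal := a.isLt
    have hbl := b.isLt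
    rcases Nat.lt_trichotomy a.val p.val with ha | ha | ha
    · rw [(hcval a).1 ha]
      rcases Nat.lt_trichotomy b.val p.val with hb | hb | hb
      · rw [(hcval b).1 hb]
        exact P.l_strictMono (by rw [Fin.lt_def]; exact hab)
      · rw [(hcval b).2.1 hb]
        have hx1 := hp1 (by omega)
        calc P.l ⟨a.val, by omega⟩ ≤ P.l ⟨p.val - 1, by omega⟩ :=
              P.l_strictMono.monotone (by rw [Fin.le_def]; simp; omega)
          _ < x := hx1.1
      · rw [(hcval b).2.2 hb]
        have hx1 := hp1 (by omega)
        have hg1 : x ≤ P.g ⟨p.val - 1, by omega⟩ := aux_N_high hx1.2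
        calc P.l ⟨a.val, by omega⟩ ≤ P.l ⟨p.val - 1, by omega⟩ :=
              P.l_strictMono.monotone (by rw [Fin.le_def]; simp; omega)
          _ < x := hx1.1
          _ ≤ P.g ⟨p.val - 1, by omega⟩ := hg1
          _ ≤ P.g ⟨b.val - 1, by omega⟩ :=
              P.g_strictMono.monotone (by rw [Fin.le_def]; simp; omega)
    · rw [(hcval a).2.1 ha]
      have hb : p.val < b.val := by omega
      rw [(hcval b).2.2 hb]
      have hx2 := hp2 (by omega)
      calc x < P.g ⟨p.val, by omega⟩ := hx2.1
        _ ≤ P.g ⟨b.val - 1, by omega⟩ :=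
            P.g_strictMono.monotone (by rw [Fin.le_def]; simp; omega)
    · have hb : p.val < b.val := by omega
      rw [(hcval a).2.2 ha, (hcval b).2.2 hb]
      exact P.g_strictMono (by rw [Fin.lt_def]; simp; omega)
  refine ⟨c, ⟨fun a b hab => hlt a b hab, ?_, ?_⟩, ⟨p, ((hcval p).2.1 rfl)⟩⟩
  · intro i
    have hil := i.isLt
    rcases Nat.lt_trichotomy i.val p.val with hi | hi | hi
    · rw [(hcval i.castSucc).1 (by simpa using hi)]
      exact aux_memN (P.l_strictMono.monotone (by rw [Fin.le_def]; simp))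
        ((P.l_le_g _).trans (P.g_strictMono.monotone (by rw [Fin.le_def]; simp)))
    · rw [(hcval i.castSucc).2.1 (by simpa using hi)]
      have hx2 := hp2 (by omega)
      have hpi : (⟨p.val, by omega⟩ : Fin r) = i := Fin.ext (show p.val = i.val by omega)
      rw [← hpi]
      exact hx2.2
    · rw [(hcval i.castSucc).2.2 (by simpa using hi)]
      have hconn2 := hconn' (i.val - 1) (by omega)
      have e1 : (⟨i.val - 1 + 1, by omega⟩ : Fin r) = i :=
        Fin.ext (show i.val - 1 + 1 = i.val by omega)
      have e2 : (⟨(i.castSucc : Fin (r + 1)).val - 1, by have := (i.castSucc).isLt; omega⟩ : Fin r)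
          = ⟨i.val - 1, by omega⟩ := Fin.ext (by simp)
      rw [e1] at hconn2
      rw [e2]
      exact aux_memN hconn2 (P.g_strictMono.monotone (by rw [Fin.le_def]; simp))
  · intro i
    have hil := i.isLt
    rcases Nat.lt_trichotomy (i.val + 1) p.val with hi | hi | hi
    · rw [(hcval i.succ).1 (by simpa using hi)]
      have hconn2 := hconn' i.val (by omega)
      have e1 : (⟨(i.succ : Fin (r + 1)).val, by simp only [Fin.val_succ]; omega⟩ : Fin r)
          = ⟨i.val + 1, by omega⟩ :=
        Fin.ext (by simp)
      have e2 : (⟨i.val, by omega⟩ : Fin r) = i := Fin.ext rfl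
      rw [e1]
      rw [e2] at hconn2
      exact aux_memN (P.l_strictMono.monotone (by rw [Fin.le_def]; simp)) hconn2
    · rw [(hcval i.succ).2.1 (by simpa using hi)]
      have hx1 := hp1 (by omega)
      have hpi : (⟨p.val - 1, by have := p.isLt; omega⟩ : Fin r) = i :=
        Fin.ext (show p.val - 1 = i.val by omega)
      rw [← hpi]
      exact hx1.2
    · rw [(hcval i.succ).2.2 (by simpa using hi)]
      have e : (⟨(i.succ : Fin (r + 1)).val - 1, by have := (i.succ).isLt; omega⟩ : Fin r) = i :=
        Fin.ext (by simp)
      rw [e]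
      exact aux_memN (P.l_le_g i) (le_refl _)

lemma aux_chain_exists' (hr : 1 ≤ r) (P : LPP m r)
    (hconn' : ∀ (i : ℕ) (h : i + 1 < r), P.l ⟨i + 1, h⟩ ≤ P.g ⟨i, by omega⟩)
    (x : ℕ) (q : ℕ) (hq : q ≤ r)
    (hp1 : ∀ _ : 1 ≤ q, P.l ⟨q - 1, by omega⟩ < x ∧ x ∈ P.N ⟨q - 1, by omega⟩)
    (hp2 : ∀ h : q < r, x < P.g ⟨q, h⟩ ∧ x ∈ P.N ⟨q, h⟩) :
    ∃ c : Fin (r + 1) → ℕ, ChainC P c ∧ x ∈ Set.range c := by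
  refine aux_chain_exists hr P hconn' x ⟨q, by omega⟩ ?_ ?_
  · intro h
    exact hp1 h
  · intro h
    exact hp2 h

end LPM
open LPM in
/-- In a connected lattice path matroid `M[N]` (with
`m, r ≥ 1`), an element `x` lies in a spanning circuit iff `x` is in at least
two of the sets `N 1, …, N r`, or `x ∈ N 1`, or `x ∈ N r`. -/
theorem stmt9 {m r : ℕ} (hm : 1 ≤ m) (hr : 1 ≤ r) (P : LPP m r)
    (M : Matroid ℕ) (hM : IsLPMOf P M) (hconn : Connected M)
    (x : ℕ) (hx : x ∈ Set.Icc 1 (m + r)) :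
    (∃ C : Set ℕ, Circuit M C ∧ rk M C = rk M M.E ∧ x ∈ C) ↔
      ((∃ i j : Fin r, i ≠ j ∧ x ∈ P.N i ∧ x ∈ P.N j) ∨
        x ∈ P.N ⟨0, by omega⟩ ∨ x ∈ P.N ⟨r - 1, by omega⟩) := by
  have h0r : 0 < r := by omega
  have hr1r : r - 1 < r := by omega
  constructor
  · rintro ⟨C, hC, hrkC, hxC⟩
    have hrkE : rk M M.E = r := aux_rk_ground P hM
    have hrk' : rk M C = r := by rw [hrkC, hrkE]
    obtain ⟨c, ⟨hmono, h1, h2⟩, rfl⟩ := aux_circuit_chain hr P hM hC hrk'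
    obtain ⟨k, rfl⟩ := hxC
    have hkl := k.isLt
    by_cases hk0 : k.val = 0
    · exact Or.inr (Or.inl (aux_chain_mem1 h1 0 h0r k hk0))
    · by_cases hkr : k.val = r
      · exact Or.inr (Or.inr (aux_chain_mem2 h2 (r - 1) hr1r k (by omega)))
      · refine Or.inl ⟨⟨k.val - 1, by omega⟩, ⟨k.val, by omega⟩, ?_, ?_, ?_⟩
        · intro hEq
          simp only [Fin.mk.injEq] at hEq
          omega
        · exact aux_chain_mem2 h2 (k.val - 1) (by omega) k (by omega)
        · exact aux_chain_mem1 h1 k.val (by omega) k rfl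
  · intro H
    have hconn' : ∀ (i : ℕ) (h : i + 1 < r), P.l ⟨i + 1, h⟩ ≤ P.g ⟨i, by omega⟩ :=
      fun i h => aux_conn hm hr P hM hconn i h
    have hl0 : P.l ⟨0, h0r⟩ = 1 := by
      obtain ⟨i, hi⟩ := aux_cover hm hr P hM hconn
        (show (1 : ℕ) ∈ Set.Icc 1 (m + r) by simp; omega)
      have h1 := aux_N_low hi
      have h2 : P.l ⟨0, h0r⟩ ≤ P.l i :=
        P.l_strictMono.monotone (Fin.le_def.mpr (show 0 ≤ i.val by omega))
      have h3 := P.one_le_l (⟨0, h0r⟩ : Fin r)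
      omega
    have hgr : P.g ⟨r - 1, hr1r⟩ = m + r := by
      obtain ⟨i, hi⟩ := aux_cover hm hr P hM hconn
        (show (m + r) ∈ Set.Icc 1 (m + r) by simp; omega)
      have h1 := aux_N_high hi
      have h2 : P.g i ≤ P.g ⟨r - 1, hr1r⟩ :=
        P.g_strictMono.monotone (Fin.le_def.mpr (show i.val ≤ r - 1 by have := i.isLt; omega))
      have h3 := P.g_le (⟨r - 1, hr1r⟩ : Fin r)
      omega
    have key2 : ∀ i j : Fin r, i.val < j.val → x ∈ P.N i → x ∈ P.N j →
        ∃ c : Fin (r + 1) → ℕ, ChainC P c ∧ x ∈ Set.range c := by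
      intro i j hij hxi hxj
      have hjl := j.isLt
      have hi1r : i.val + 1 < r := by omega
      apply aux_chain_exists' hr P hconn' x (i.val + 1) (by omega)
      · intro h
        constructor
        · show P.l i < x
          exact lt_of_lt_of_le (P.l_strictMono (Fin.lt_def.mpr hij)) (aux_N_low hxj)
        · show x ∈ P.N i
          exact hxi
      · intro h
        constructor
        · show x < P.g ⟨i.val + 1, hi1r⟩
          exact lt_of_le_of_lt (aux_N_high hxi)
            (P.g_strictMono (Fin.lt_def.mpr (show i.val < i.val + 1 by omega)))
        · show x ∈ P.N ⟨i.val + 1, hi1r⟩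
          refine aux_memN ?_ ?_
          · exact le_trans
              (P.l_strictMono.monotone (Fin.le_def.mpr (show i.val + 1 ≤ j.val by omega)))
              (aux_N_low hxj)
          · exact le_trans (aux_N_high hxi)
              (P.g_strictMono.monotone (Fin.le_def.mpr (show i.val ≤ i.val + 1 by omega)))
    have hgoal : ∃ c : Fin (r + 1) → ℕ, ChainC P c ∧ x ∈ Set.range c := by
      rcases H with ⟨i, j, hne, hxi, hxj⟩ | hx0 | hxr
      · rcases Nat.lt_trichotomy i.val j.val with h | h | h
        · exact key2 i j h hxi hxj
        · exact absurd (Fin.ext h) hne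
        · exact key2 j i h hxj hxi
      · have hx0' : x ∈ P.N ⟨0, h0r⟩ := hx0
        by_cases hlt : x < P.g ⟨0, h0r⟩
        · apply aux_chain_exists' hr P hconn' x 0 (by omega)
          · intro h
            exact absurd h (by omega)
          · intro h
            exact ⟨hlt, hx0'⟩
        · have hxg : x = P.g ⟨0, h0r⟩ := by
            have := aux_N_high hx0'
            omega
          by_cases hr1 : r = 1
          · apply aux_chain_exists' hr P hconn' x r (le_refl r)
            · intro h
              have e : (⟨0, h0r⟩ : Fin r) = ⟨r - 1, hr1r⟩ :=
                Fin.ext (show (0 : ℕ) = r - 1 by omega)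
              have hg0 : P.g ⟨0, h0r⟩ = m + r := by rw [e]; exact hgr
              have hlr1 : P.l ⟨r - 1, hr1r⟩ = 1 := by rw [← e]; exact hl0
              have hxv : x = m + r := by rw [hxg, hg0]
              constructor
              · show P.l ⟨r - 1, hr1r⟩ < x
                rw [hlr1, hxv]; omega
              · show x ∈ P.N ⟨r - 1, hr1r⟩
                refine aux_memN ?_ ?_
                · rw [hlr1, hxv]; omega
                · rw [hgr, hxv]
            · intro h
              exact absurd h (by omega)
          · have h1r : 1 < r := by omega
            have hx1 : x ∈ P.N ⟨1, h1r⟩ := by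
              refine aux_memN ?_ ?_
              · have hcc : P.l ⟨1, h1r⟩ ≤ P.g ⟨0, h0r⟩ := hconn' 0 h1r
                rw [← hxg] at hcc
                exact hcc
              · rw [hxg]
                exact le_of_lt (P.g_strictMono (Fin.mk_lt_mk.mpr (by omega)))
            exact key2 ⟨0, h0r⟩ ⟨1, h1r⟩ (show (0 : ℕ) < 1 by omega) hx0' hx1
      · have hxr' : x ∈ P.N ⟨r - 1, hr1r⟩ := hxr
        by_cases hlt : P.l ⟨r - 1, hr1r⟩ < x
        · apply aux_chain_exists' hr P hconn' x r (le_refl r)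
          · intro h
            exact ⟨hlt, hxr'⟩
          · intro h
            exact absurd h (by omega)
        · have hxl : x = P.l ⟨r - 1, hr1r⟩ := by
            have := aux_N_low hxr'
            omega
          by_cases hr1 : r = 1
          · apply aux_chain_exists' hr P hconn' x 0 (by omega)
            · intro h
              exact absurd h (by omega)
            · intro h
              have e : (⟨0, h0r⟩ : Fin r) = ⟨r - 1, hr1r⟩ :=
                Fin.ext (show (0 : ℕ) = r - 1 by omega)
              have hg0 : P.g ⟨0, h0r⟩ = m + r := by rw [e]; exact hgr
              have hx1 : x = 1 := by rw [hxl, ← e, hl0]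
              constructor
              · show x < P.g ⟨0, h0r⟩
                rw [hx1, hg0]; omega
              · show x ∈ P.N ⟨0, h0r⟩
                rw [e]; exact hxr'
          · have hr2r : r - 2 < r := by omega
            apply key2 ⟨r - 2, hr2r⟩ ⟨r - 1, hr1r⟩ (show r - 2 < r - 1 by omega) ?_ hxr'
            refine aux_memN ?_ ?_
            · have hll : P.l ⟨r - 2, hr2r⟩ < P.l ⟨r - 1, hr1r⟩ :=
                P.l_strictMono (Fin.mk_lt_mk.mpr (by omega))
              rw [← hxl] at hll
              exact le_of_lt hll
            · have hc2 : P.l ⟨r - 1, hr1r⟩ ≤ P.g ⟨r - 2, hr2r⟩ := by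
                have h2 := hconn' (r - 2) (by omega)
                have e : (⟨r - 2 + 1, by omega⟩ : Fin r) = ⟨r - 1, hr1r⟩ :=
                  Fin.ext (show r - 2 + 1 = r - 1 by omega)
                rw [e] at h2
                exact h2
              rw [hxl]
              exact hc2
    obtain ⟨c, hc, hxc⟩ := hgoal
    obtain ⟨hcirc, hrkc⟩ := aux_chain_circuit hr P hM hc
    exact ⟨Set.range c, hcirc, by rw [hrkc, aux_rk_ground P hM], hxc⟩
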